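/- For a finite family of pairwise disjoint closed axis-aligned rectangles contained in the boundary B and a fixed direction α ∈ {left, right, up, down}, the blocking relation in direction α (R_j blocks R_i if j ≠ i and R_j intersects the α-escape path of R_i) contains no directed cycle; in particular it admits a topological order. -/

import Mathlib

/-- One of the four axis-aligned escape directions. -/
inductive Dir | left | right | up | down
deriving DecidableEq

instance : Fintype Dir :=
  ⟨{Dir.left, Dir.right, Dir.up, Dir.down}, fun x => by cases x <;> simp⟩

/-- A closed axis-aligned rectangle `[xmin,xmax] × [ymin,ymax]`. -/
structure Rect where
  xmin : ℝ
  xmax : ℝ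
  ymin : ℝ
  ymax : ℝ

/-- The point set of a rectangle. -/
def Rect.pts (r : Rect) : Set (ℝ × ℝ) :=
  {p | r.xmin ≤ p.1 ∧ p.1 ≤ r.xmax ∧ r.ymin ≤ p.2 ∧ p.2 ≤ r.ymax}

/-- The rectangle is a genuine (nonempty) closed rectangle. -/
def Rect.proper (r : Rect) : Prop := r.xmin ≤ r.xmax ∧ r.ymin ≤ r.ymax

/-- The boundary box `B = [0,W] × [0,H]`. -/
def boundaryBox (W H : ℝ) : Set (ℝ × ℝ) := {p | 0 ≤ p.1 ∧ p.1 ≤ W ∧ 0 ≤ p.2 ∧ p.2 ≤ H}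

/-- The rectangle is contained in the boundary box `[0,W] × [0,H]`. -/
def Rect.inB (W H : ℝ) (r : Rect) : Prop :=
  0 ≤ r.xmin ∧ r.xmax ≤ W ∧ 0 ≤ r.ymin ∧ r.ymax ≤ H

/-- The escape path of a rectangle in a given direction, inside `[0,W] × [0,H]`. -/
def Rect.escape (W H : ℝ) (r : Rect) : Dir → Set (ℝ × ℝ)
  | Dir.right => {p | r.xmin ≤ p.1 ∧ p.1 ≤ W ∧ r.ymin ≤ p.2 ∧ p.2 ≤ r.ymax}
  | Dir.left  => {p | 0 ≤ p.1 ∧ p.1 ≤ r.xmax ∧ r.ymin ≤ p.2 ∧ p.2 ≤ r.ymax}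
  | Dir.up    => {p | r.xmin ≤ p.1 ∧ p.1 ≤ r.xmax ∧ r.ymin ≤ p.2 ∧ p.2 ≤ H}
  | Dir.down  => {p | r.xmin ≤ p.1 ∧ p.1 ≤ r.xmax ∧ 0 ≤ p.2 ∧ p.2 ≤ r.ymax}

/-- Density at point `p` of the escape assignment `σ` restricted to the subfamily `S`. -/
noncomputable def density {n : ℕ} (W H : ℝ) (R : Fin n → Rect) (S : Set (Fin n))
    (σ : Fin n → Dir) (p : ℝ × ℝ) : ℕ :=
  {i | i ∈ S ∧ p ∈ (R i).escape W H (σ i)}.ncard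

/-- The optimal (minimum over assignments of the maximum over points of `B`) density of
the subfamily `S`. -/
noncomputable def optDensity {n : ℕ} (W H : ℝ) (R : Fin n → Rect) (S : Set (Fin n)) : ℕ :=
  sInf {k | ∃ σ : Fin n → Dir, ∀ p ∈ boundaryBox W H, density W H R S σ p ≤ k}

/-- `R j` blocks `R i` in direction `α`. -/
def blocks {n : ℕ} (W H : ℝ) (R : Fin n → Rect) (α : Dir) (j i : Fin n) : Prop :=
  j ≠ i ∧ ¬ Disjoint (R j).pts ((R i).escape W H α)

/-- `R i` is free in direction `α` within the subfamily `S`: no other rectangle of `S`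
blocks it in direction `α`. -/
def free {n : ℕ} (W H : ℝ) (R : Fin n → Rect) (S : Set (Fin n)) (i : Fin n) (α : Dir) : Prop :=
  ∀ j ∈ S, j ≠ i → Disjoint ((R i).escape W H α) (R j).pts

/-- `peel W H R ℓ` is the set of indices remaining after removing peeling levels `1,…,ℓ`. -/
def peel {n : ℕ} (W H : ℝ) (R : Fin n → Rect) : ℕ → Set (Fin n)
  | 0 => Set.univ
  | ℓ + 1 => {i ∈ peel W H R ℓ | ¬ ∃ α, free W H R (peel W H R ℓ) i α}

/-- The peeling level of rectangle `R i` (the least `ℓ` at which it has been removed). -/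
noncomputable def levelOf {n : ℕ} (W H : ℝ) (R : Fin n → Rect) (i : Fin n) : ℕ :=
  sInf {ℓ | i ∉ peel W H R ℓ}

/-- The number `ρ` of nonempty peeling levels. -/
noncomputable def numLevels {n : ℕ} (W H : ℝ) (R : Fin n → Rect) : ℕ :=
  sInf {ℓ | peel W H R ℓ = ∅}

/-- For pairwise disjoint rectangles in `B` and a fixed direction `α`, the
blocking relation in direction `α` has no directed cycle (its transitive closure is
irreflexive); in particular it admits a topological order. -/
theorem blocking_relation_acyclic {n : ℕ} (W H : ℝ) (R : Fin n → Rect)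
    (hprop : ∀ i, (R i).proper) (hin : ∀ i, (R i).inB W H)
    (hdisj : ∀ i j, i ≠ j → Disjoint (R i).pts (R j).pts)
    (α : Dir) :
    ∀ i, ¬ Relation.TransGen (blocks W H R α) i i := by
  -- a measure strictly decreasing along the blocking relation
  set f : Fin n → ℝ := fun i =>
    match α with
    | Dir.right => (R i).xmin
    | Dir.left  => -(R i).xmax
    | Dir.up    => (R i).ymin
    | Dir.down  => -(R i).ymax with hf
  have key : ∀ j i, blocks W H R α j i → f i < f j := by
    intro j i ⟨hne, hnd⟩
    rw [Set.not_disjoint_iff] at hnd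
    obtain ⟨p, hpj, hpi⟩ := hnd
    have hdij := hdisj i j (fun h => hne h.symm)
    rw [Set.disjoint_left] at hdij
    obtain ⟨hj1, hj2, hj3, hj4⟩ := hpj
    have hpropi := hprop i
    by_contra hle
    push_neg at hle
    cases α with
    | right =>
      obtain ⟨hi1, hi2, hi3, hi4⟩ := hpi
      exact hdij (a := ((R i).xmin, p.2))
        ⟨le_refl _, hpropi.1, hi3, hi4⟩
        ⟨hle, le_trans hi1 hj2, hj3, hj4⟩
    | left =>
      obtain ⟨hi1, hi2, hi3, hi4⟩ := hpi
      exact hdij (a := ((R i).xmax, p.2))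
        ⟨hpropi.1, le_refl _, hi3, hi4⟩
        ⟨le_trans hj1 hi2, neg_le_neg_iff.mp hle, hj3, hj4⟩
    | up =>
      obtain ⟨hi1, hi2, hi3, hi4⟩ := hpi
      exact hdij (a := (p.1, (R i).ymin))
        ⟨hi1, hi2, le_refl _, hpropi.2⟩
        ⟨hj1, hj2, hle, le_trans hi3 hj4⟩
    | down =>
      exact hdij (a := (p.1, (R i).ymax))
        ⟨hpi.1, hpi.2.1, hpropi.2, le_refl _⟩
        ⟨hj1, hj2, hj3.trans hpi.2.2.2, neg_le_neg_iff.mp hle⟩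
  have keyT : ∀ j i, Relation.TransGen (blocks W H R α) j i → f i < f j := by
    intro j i h
    induction h with
    | single h => exact key _ _ h
    | tail _ h ih => exact lt_trans (key _ _ h) ih
  intro i h
  exact lt_irrefl _ (keyT i i h)
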